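/- Let (u_n) be the coefficient sequence of the composition inverse U of R_1 = R + 1 over F_2, where R is the Rudin–Shapiro generating series. If both the frequency of 0's and the frequency of 1's exist in (u_n) (that is, if |{k < N : u_k = 1}|/N converges), this leads to a contradiction; hence the frequencies of 0's and 1's in (u_n) do not both exist — in fact neither exists, given that (u_n) contains arbitrarily long runs of 0's and arbitrarily long runs of 1's. -/

import Mathlib

open PowerSeries Filter

/-- Composition `f(g(X))` of formal power series (meaningful when the
constant coefficient of `g` is zero). -/
noncomputable def PowerSeries.comp {R : Type*} [CommRing R]
    (f g : PowerSeries R) : PowerSeries R :=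
  PowerSeries.mk fun n =>
    ∑ k ∈ Finset.range (n + 1), PowerSeries.coeff k f * PowerSeries.coeff n (g ^ k)

section Aux

lemma aux_count_split (p : ℕ → Prop) [DecidablePred p] (a t : ℕ) :
    ((Finset.range (a + t)).filter p).card =
      ((Finset.range a).filter p).card + ((Finset.Ico a (a + t)).filter p).card := by
  rw [Finset.range_eq_Ico, ← Finset.Ico_union_Ico_eq_Ico (Nat.zero_le a) (Nat.le_add_right a t),
    Finset.filter_union, Finset.card_union_of_disjoint, ← Finset.range_eq_Ico]
  exact (Finset.Ico_disjoint_Ico_consecutive 0 a (a + t)).mono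
    (Finset.filter_subset _ _) (Finset.filter_subset _ _)

lemma aux_count_all (p : ℕ → Prop) [DecidablePred p] (a t : ℕ)
    (h : ∀ m < t, p (a + m)) :
    ((Finset.range (a + t)).filter p).card = ((Finset.range a).filter p).card + t := by
  rw [aux_count_split]
  congr 1
  rw [Finset.filter_true_of_mem, Nat.card_Ico, Nat.add_sub_cancel_left]
  intro m hm
  rw [Finset.mem_Ico] at hm
  have := h (m - a) (by omega)
  rwa [show a + (m - a) = m by omega] at this

lemma aux_count_none (p : ℕ → Prop) [DecidablePred p] (a t : ℕ)
    (h : ∀ m < t, ¬ p (a + m)) :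
    ((Finset.range (a + t)).filter p).card = ((Finset.range a).filter p).card := by
  rw [aux_count_split]
  have : ((Finset.Ico a (a + t)).filter p).card = 0 := by
    rw [Finset.card_eq_zero, Finset.filter_eq_empty_iff]
    intro m hm
    rw [Finset.mem_Ico] at hm
    have := h (m - a) (by omega)
    rwa [show a + (m - a) = m by omega] at this
  omega

lemma aux_limit_run (c : ℕ → ℕ) (L : ℝ)
    (hf : Filter.Tendsto (fun N : ℕ => (c N : ℝ) / N) Filter.atTop (nhds L))
    (a b d : ℕ) (ha : 0 < a) (hb : 0 < b)
    (hc : ∀ k : ℕ, c (b * 2 ^ k) = c (a * 2 ^ k) + d * 2 ^ k) :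
    L * b = L * a + d := by
  have hpow : Filter.Tendsto (fun k : ℕ => 2 ^ k) Filter.atTop Filter.atTop :=
    tendsto_pow_atTop_atTop_of_one_lt one_lt_two
  have hmul : ∀ e : ℕ, 0 < e →
      Filter.Tendsto (fun k : ℕ => e * 2 ^ k) Filter.atTop Filter.atTop := by
    intro e he
    exact Filter.tendsto_atTop_mono (fun k => Nat.le_mul_of_pos_left (2 ^ k) he) hpow
  have hA : Filter.Tendsto (fun k : ℕ => (c (a * 2 ^ k) : ℝ) / ((a * 2 ^ k : ℕ) : ℝ))
      Filter.atTop (nhds L) := hf.comp (hmul a ha)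
  have hB : Filter.Tendsto (fun k : ℕ => (c (b * 2 ^ k) : ℝ) / ((b * 2 ^ k : ℕ) : ℝ))
      Filter.atTop (nhds L) := hf.comp (hmul b hb)
  have hcomb : Filter.Tendsto
      (fun k : ℕ => (b : ℝ) * ((c (b * 2 ^ k) : ℝ) / ((b * 2 ^ k : ℕ) : ℝ))
        - (a : ℝ) * ((c (a * 2 ^ k) : ℝ) / ((a * 2 ^ k : ℕ) : ℝ)))
      Filter.atTop (nhds ((b : ℝ) * L - (a : ℝ) * L)) :=
    (hB.const_mul _).sub (hA.const_mul _)
  have heq : ∀ k : ℕ, (b : ℝ) * ((c (b * 2 ^ k) : ℝ) / ((b * 2 ^ k : ℕ) : ℝ))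
      - (a : ℝ) * ((c (a * 2 ^ k) : ℝ) / ((a * 2 ^ k : ℕ) : ℝ)) = d := by
    intro k
    have h2 : (2 : ℝ) ^ k ≠ 0 := by positivity
    have haR : (a : ℝ) ≠ 0 := Nat.cast_ne_zero.mpr ha.ne'
    have hbR : (b : ℝ) ≠ 0 := Nat.cast_ne_zero.mpr hb.ne'
    rw [hc k]
    push_cast
    field_simp
    ring
  rw [Filter.tendsto_congr heq] at hcomb
  have := tendsto_nhds_unique hcomb tendsto_const_nhds
  linarith [this]

end Aux

theorem rudin_shapiro_prime_inverse_no_frequency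
    (r : ℕ → ZMod 2) (h0 : r 0 = 1)
    (h2 : ∀ n, r (2 * n) = r n)
    (h41 : ∀ n, r (4 * n + 1) = r n)
    (h43 : ∀ n, r (4 * n + 3) = 1 + r (2 * n + 1))
    (R R₁ U : PowerSeries (ZMod 2))
    (hR : R = PowerSeries.mk r) (hR1 : R₁ = R + 1)
    (hU0 : PowerSeries.constantCoeff U = 0)
    (hRU : PowerSeries.comp R₁ U = PowerSeries.X)
    (hUR : PowerSeries.comp U R₁ = PowerSeries.X)
    (u : ℕ → ZMod 2) (hu : ∀ n, u n = PowerSeries.coeff n U)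
    (hrun0 : ∀ k : ℕ, ∀ m < 2 ^ k, u (79 * 2 ^ k + m) = 0)
    (hrun1 : ∀ k : ℕ, ∀ m < 2 ^ k, u (47 * 2 ^ k + m) = 1) :
    (¬ ∃ L : ℝ, Filter.Tendsto
        (fun N : ℕ => (((Finset.range N).filter fun k => u k = 0).card : ℝ) / N)
        Filter.atTop (nhds L)) ∧
    (¬ ∃ L : ℝ, Filter.Tendsto
        (fun N : ℕ => (((Finset.range N).filter fun k => u k = 1).card : ℝ) / N)
        Filter.atTop (nhds L)) := by
  have h01 : (1 : ZMod 2) ≠ 0 := by decide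
  constructor
  · rintro ⟨L, hL⟩
    set c : ℕ → ℕ := fun N => ((Finset.range N).filter fun k => u k = 0).card with hcdef
    have hc80 : ∀ k : ℕ, c (80 * 2 ^ k) = c (79 * 2 ^ k) + 1 * 2 ^ k := by
      intro k
      have : 80 * 2 ^ k = 79 * 2 ^ k + 2 ^ k := by ring
      rw [this, one_mul]
      exact aux_count_all _ _ _ (fun m hm => hrun0 k m hm)
    have hc48 : ∀ k : ℕ, c (48 * 2 ^ k) = c (47 * 2 ^ k) + 0 * 2 ^ k := by
      intro k
      have : 48 * 2 ^ k = 47 * 2 ^ k + 2 ^ k := by ring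
      rw [this, zero_mul, add_zero]
      exact aux_count_none _ _ _ (fun m hm h => h01 ((hrun1 k m hm) ▸ h : (1:ZMod 2) = 0))
    have e1 := aux_limit_run c L hL 79 80 1 (by norm_num) (by norm_num) hc80
    have e2 := aux_limit_run c L hL 47 48 0 (by norm_num) (by norm_num) hc48
    push_cast at e1 e2
    linarith
  · rintro ⟨L, hL⟩
    set c : ℕ → ℕ := fun N => ((Finset.range N).filter fun k => u k = 1).card with hcdef
    have hc48 : ∀ k : ℕ, c (48 * 2 ^ k) = c (47 * 2 ^ k) + 1 * 2 ^ k := by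
      intro k
      have : 48 * 2 ^ k = 47 * 2 ^ k + 2 ^ k := by ring
      rw [this, one_mul]
      exact aux_count_all _ _ _ (fun m hm => hrun1 k m hm)
    have hc80 : ∀ k : ℕ, c (80 * 2 ^ k) = c (79 * 2 ^ k) + 0 * 2 ^ k := by
      intro k
      have : 80 * 2 ^ k = 79 * 2 ^ k + 2 ^ k := by ring
      rw [this, zero_mul, add_zero]
      exact aux_count_none _ _ _ (by intro m hm h; rw [hrun0 k m hm] at h; exact h01 h.symm)
    have e1 := aux_limit_run c L hL 47 48 1 (by norm_num) (by norm_num) hc48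
    have e2 := aux_limit_run c L hL 79 80 0 (by norm_num) (by norm_num) hc80
    push_cast at e1 e2
    linarith
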